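/- Any finite set of n (possibly open, half-open, or closed) intervals on the real line can be replaced by n closed intervals with integer endpoints in {1,...,n} preserving the pairwise intersection relation: two new intervals intersect if and only if the original corresponding intervals intersect. -/

import Mathlib

open Classical Finset

/-- Two disjoint nonempty ord-connected sets in ℝ are separated: one lies entirely
below the other. -/
lemma sep_aux {A B : Set ℝ} (hA : A.OrdConnected) (hB : B.OrdConnected)
    (hAB : ¬ (A ∩ B).Nonempty) :
    (∀ x ∈ A, ∀ y ∈ B, x < y) ∨ (∀ y ∈ B, ∀ x ∈ A, y < x) := by
  by_contra h
  push_neg at h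
  obtain ⟨⟨x, hx, y, hy, hyx⟩, ⟨y', hy', x', hx', hxy'⟩⟩ := h
  rcases le_or_gt x' y with h1 | h1
  · exact hAB ⟨y, hA.out hx' hx ⟨h1, hyx⟩, hy⟩
  · exact hAB ⟨x', hx', hB.out hy hy' ⟨h1.le, hxy'⟩⟩

noncomputable section

variable {n : ℕ} (I : Fin n → Set ℝ)

/-- The key used to sort intervals: (infimum in `EReal`, whether the infimum is *not*
attained, the index for tie-breaking). -/
private noncomputable def ikey (i : Fin n) : Lex ((Lex (EReal × Bool)) × Fin n) :=
  toLex (toLex (sInf ((↑) '' I i : Set EReal),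
    !(decide (sInf ((↑) '' I i : Set EReal) ∈ ((↑) '' I i : Set EReal)))), i)

private lemma ikey_lt {i j k : Fin n}
    (hij : ∀ x ∈ I i, ∀ y ∈ I j, x < y) {x : ℝ} (hxk : x ∈ I k) (hxi : x ∈ I i) :
    ikey I k < ikey I j := by
  set mk : EReal := sInf ((↑) '' I k : Set EReal) with hmk
  set mj : EReal := sInf ((↑) '' I j : Set EReal) with hmj
  have h1 : mk ≤ (x : EReal) := sInf_le ⟨x, hxk, rfl⟩
  have h2 : (x : EReal) ≤ mj := by
    refine le_sInf ?_
    rintro z ⟨y, hy, rfl⟩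
    exact_mod_cast (hij x hxi y hy).le
  have hxj : x ∉ I j := fun hx => lt_irrefl x (hij x hxi x hx)
  rcases lt_or_eq_of_le (h1.trans h2) with h | h
  · exact Prod.Lex.lt_iff |>.mpr (Or.inl (Prod.Lex.lt_iff |>.mpr (Or.inl h)))
  · -- mk = mj, so mk = mj = x
    have hmkx : mk = (x : EReal) := le_antisymm h1 (h ▸ h2)
    have hmjx : mj = (x : EReal) := le_antisymm (h ▸ h1) h2
    have hbk : (!(decide (mk ∈ ((↑) '' I k : Set EReal)))) = false := by
      simp only [Bool.not_eq_false', decide_eq_true_eq]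
      rw [hmkx]
      exact ⟨x, hxk, rfl⟩
    have hbj : (!(decide (mj ∈ ((↑) '' I j : Set EReal)))) = true := by
      simp only [Bool.not_eq_true', decide_eq_false_iff_not]
      rw [hmjx]
      rintro ⟨y, hy, hyx⟩
      exact hxj (by rwa [show y = x from by exact_mod_cast hyx] at hy)
    refine Prod.Lex.lt_iff |>.mpr (Or.inl ?_)
    refine Prod.Lex.lt_iff |>.mpr (Or.inr ⟨h, ?_⟩)
    show (!(decide (mk ∈ _))) < (!(decide (mj ∈ _)))
    rw [hbk, hbj]
    exact Bool.false_lt_true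

end

theorem stmt_1 (n : ℕ) (I : Fin n → Set ℝ)
    (hI : ∀ i, (I i).OrdConnected) (hne : ∀ i, (I i).Nonempty) :
    ∃ s t : Fin n → ℤ,
      (∀ i, 1 ≤ s i ∧ s i ≤ t i ∧ t i ≤ (n : ℤ)) ∧
      ∀ i j : Fin n,
        ((Set.Icc (s i) (t i) : Set ℤ) ∩ Set.Icc (s j) (t j)).Nonempty ↔
        (I i ∩ I j).Nonempty := by
  classical
  -- the rank function
  set s : Fin n → ℤ := fun i =>
    1 + ((Finset.univ.filter (fun j => ikey I j < ikey I i)).card : ℤ) with hs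
  -- monotonicity of the rank
  have smono : ∀ {i j : Fin n}, ikey I i < ikey I j → s i < s j := by
    intro i j hij
    have hsub : (Finset.univ.filter (fun k => ikey I k < ikey I i)) ⊂
        (Finset.univ.filter (fun k => ikey I k < ikey I j)) := by
      refine Finset.ssubset_iff_of_subset ?_ |>.mpr ⟨i, ?_, ?_⟩
      · intro k hk
        simp only [Finset.mem_filter, Finset.mem_univ, true_and] at hk ⊢
        exact hk.trans hij
      · simp [hij]
      · simp
    have := Finset.card_lt_card hsub
    simp only [hs]
    omega
  have s_ge : ∀ i, 1 ≤ s i := by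
    intro i; simp only [hs]; omega
  have s_le : ∀ i, s i ≤ (n : ℤ) := by
    intro i
    have hsub : (Finset.univ.filter (fun k => ikey I k < ikey I i)) ⊂ Finset.univ := by
      refine Finset.ssubset_univ_iff.mpr fun h => ?_
      have : i ∈ Finset.univ := Finset.mem_univ i
      rw [← h] at this
      simp at this
    have := Finset.card_lt_card hsub
    simp only [Finset.card_univ, Fintype.card_fin] at this
    simp only [hs]
    omega
  -- the set of neighbors
  have hTne : ∀ i : Fin n, (Finset.univ.filter (fun j => (I i ∩ I j).Nonempty)).Nonempty := by
    intro i
    exact ⟨i, by simp [Set.inter_self, hne i]⟩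
  set t : Fin n → ℤ := fun i =>
    (Finset.univ.filter (fun j => (I i ∩ I j).Nonempty)).sup' (hTne i) s with ht
  have hst : ∀ i, s i ≤ t i := by
    intro i
    exact Finset.le_sup' s (by simp [Set.inter_self, hne i])
  have t_le : ∀ i, t i ≤ (n : ℤ) := by
    intro i
    exact Finset.sup'_le _ _ fun j _ => s_le j
  have hs_le_t : ∀ {i j : Fin n}, (I i ∩ I j).Nonempty → s j ≤ t i := by
    intro i j h
    exact Finset.le_sup' s (by simp [h])
  refine ⟨s, t, fun i => ⟨s_ge i, hst i, t_le i⟩, ?_⟩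
  intro i j
  constructor
  · rintro ⟨z, ⟨hz1, hz2⟩, ⟨hz3, hz4⟩⟩
    by_contra hdisj
    rcases sep_aux (hI i) (hI j) hdisj with h | h
    · -- I i entirely below I j : t i < s j
      have : t i < s j := by
        refine Finset.sup'_lt_iff (hTne i) |>.mpr ?_
        rintro k hk
        simp only [Finset.mem_filter, Finset.mem_univ, true_and] at hk
        obtain ⟨x, hxi, hxk⟩ := hk
        exact smono (ikey_lt I h hxk hxi)
      omega
    · have hdisj' : ¬ (I j ∩ I i).Nonempty := fun ⟨x, h1, h2⟩ => hdisj ⟨x, h2, h1⟩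
      have : t j < s i := by
        refine Finset.sup'_lt_iff (hTne j) |>.mpr ?_
        rintro k hk
        simp only [Finset.mem_filter, Finset.mem_univ, true_and] at hk
        obtain ⟨x, hxj, hxk⟩ := hk
        exact smono (ikey_lt I h hxk hxj)
      omega
  · intro h
    have h' : (I j ∩ I i).Nonempty := h.imp fun x ⟨h1, h2⟩ => ⟨h2, h1⟩
    refine ⟨max (s i) (s j), ⟨le_max_left _ _, ?_⟩, ⟨le_max_right _ _, ?_⟩⟩
    · exact max_le (hst i) (hs_le_t h)
    · exact max_le (hs_le_t h') (hst j)
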